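/- If a Boolean function f : {−1,1}^n → {−1,1} has degree d as a multilinear polynomial, then its Fourier sparsity (number of nonzero Fourier coefficients) is at most 4^d. -/

import Mathlib

open Finset

namespace Paper

/-- `f` is constant on the set `S`. -/
def ConstOn {n : ℕ} (f : (Fin n → ZMod 2) → ZMod 2) (S : Set (Fin n → ZMod 2)) : Prop :=
  ∃ c, ∀ y ∈ S, f y = c

/-- The subcube of points agreeing with `x` on the coordinates in `J`. -/
def cube {n : ℕ} (J : Finset (Fin n)) (x : Fin n → ZMod 2) : Set (Fin n → ZMod 2) :=
  {y | ∀ i ∈ J, y i = x i}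

/-- Certificate complexity of `f` at `x`. -/
noncomputable def C {n : ℕ} (f : (Fin n → ZMod 2) → ZMod 2) (x : Fin n → ZMod 2) : ℕ :=
  sInf {d | ∃ J : Finset (Fin n), J.card = d ∧ ConstOn f (cube J x)}

/-- Minimum certificate complexity of `f`. -/
noncomputable def Cmin {n : ℕ} (f : (Fin n → ZMod 2) → ZMod 2) : ℕ :=
  ⨅ x, C f x

/-- The affine subspace cut out by the parity constraints `⟨α j, ·⟩ = b j`. -/
def affSol {n : ℕ} (d : ℕ) (α : Fin d → Fin n → ZMod 2) (b : Fin d → ZMod 2) :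
    Set (Fin n → ZMod 2) :=
  {y | ∀ j, ∑ i, α j i * y i = b j}

/-- Parity certificate complexity of `f` at `x`. -/
noncomputable def pC {n : ℕ} (f : (Fin n → ZMod 2) → ZMod 2) (x : Fin n → ZMod 2) : ℕ :=
  sInf {d | ∃ (α : Fin d → Fin n → ZMod 2) (b : Fin d → ZMod 2),
    x ∈ affSol d α b ∧ ConstOn f (affSol d α b)}

/-- Minimum parity certificate complexity (parity kill number). -/
noncomputable def pCmin {n : ℕ} (f : (Fin n → ZMod 2) → ZMod 2) : ℕ := ⨅ x, pC f x

/-- Maximum parity certificate complexity. -/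
noncomputable def pCmax {n : ℕ} (f : (Fin n → ZMod 2) → ZMod 2) : ℕ := ⨆ x, pC f x

/-- Block composition `f ∘ g`. -/
def compose {n m : ℕ} (f : (Fin n → ZMod 2) → ZMod 2) (g : (Fin m → ZMod 2) → ZMod 2) :
    (Fin (m * n) → ZMod 2) → ZMod 2 :=
  fun y => f fun i => g fun j => y (finProdFinEquiv (j, i))

/-- The `k`-fold composition power of `f` (`power f k` agrees with `f^{∘k}` for `k ≥ 1`). -/
def power {n : ℕ} (f : (Fin n → ZMod 2) → ZMod 2) : (k : ℕ) → (Fin (n ^ k) → ZMod 2) → ZMod 2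
  | 0 => fun x => x (Fin.cast (pow_zero n).symm 0)
  | k + 1 => fun x => f fun i => power f k fun j =>
      x (Fin.cast (pow_succ n k).symm (finProdFinEquiv (j, i)))

/-- `f` is an affine function `x ↦ b ⊕ ⟨x, α⟩`. -/
def IsAffine {n : ℕ} (f : (Fin n → ZMod 2) → ZMod 2) : Prop :=
  ∃ (b : ZMod 2) (α : Fin n → ZMod 2), ∀ x, f x = b + ∑ i, α i * x i

/-- Parity decision trees on `n` input bits. -/
inductive PDT (n : ℕ) : Type
  | leaf : ZMod 2 → PDT n
  | node : (Fin n → ZMod 2) → PDT n → PDT n → PDT n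

/-- Evaluation of a parity decision tree. -/
def PDT.eval {n : ℕ} : PDT n → (Fin n → ZMod 2) → ZMod 2
  | .leaf b, _ => b
  | .node α t0 t1, x => if ∑ i, α i * x i = 0 then t0.eval x else t1.eval x

/-- Depth of a parity decision tree. -/
def PDT.depth {n : ℕ} : PDT n → ℕ
  | .leaf _ => 0
  | .node _ t0 t1 => max t0.depth t1.depth + 1

/-- Parity decision tree complexity of `f`. -/
noncomputable def DTp {n : ℕ} (f : (Fin n → ZMod 2) → ZMod 2) : ℕ :=
  sInf {d | ∃ T : PDT n, T.depth ≤ d ∧ ∀ x, T.eval x = f x}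

/-- Identify a bit with an element of `{-1, 1} ⊆ ℝ`. -/
noncomputable def toPM (b : Bool) : ℝ := if b then -1 else 1

/-- The Fourier coefficient `f̂(S)` of `f : {-1,1}^n → ℝ`. -/
noncomputable def fourier {n : ℕ} (f : (Fin n → Bool) → ℝ) (S : Finset (Fin n)) : ℝ :=
  (∑ x : Fin n → Bool, f x * ∏ i ∈ S, toPM (x i)) / 2 ^ n

open Classical in
/-- The Sort function as a real-valued function on `{-1,1}^4`. -/
noncomputable def sortR (x : Fin 4 → ℝ) : ℝ :=
  if (x 0 ≥ x 1 ∧ x 1 ≥ x 2 ∧ x 2 ≥ x 3) ∨ (x 0 ≤ x 1 ∧ x 1 ≤ x 2 ∧ x 2 ≤ x 3) then 1 else -1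

/-- The Sort function over `F_2` (ordering `0 < 1`). -/
def sortF (x : Fin 4 → ZMod 2) : ZMod 2 :=
  if ((x 1).val ≤ (x 0).val ∧ (x 2).val ≤ (x 1).val ∧ (x 3).val ≤ (x 2).val) ∨
     ((x 0).val ≤ (x 1).val ∧ (x 1).val ≤ (x 2).val ∧ (x 2).val ≤ (x 3).val) then 1 else 0


noncomputable def chi {n : ℕ} (S : Finset (Fin n)) (x : Fin n → Bool) : ℝ :=
  ∏ i ∈ S, toPM (x i)

lemma toPM_sq (b : Bool) : toPM b * toPM b = 1 := by cases b <;> norm_num [toPM]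

lemma chi_sq {n : ℕ} (S : Finset (Fin n)) (x : Fin n → Bool) : chi S x * chi S x = 1 := by
  rw [chi, ← Finset.prod_mul_distrib]
  exact Finset.prod_eq_one fun i _ => toPM_sq _

lemma chi_pm {n : ℕ} (S : Finset (Fin n)) (x : Fin n → Bool) : chi S x = 1 ∨ chi S x = -1 :=
  mul_self_eq_one_iff.mp (chi_sq S x)

lemma fourier_eq {n : ℕ} (f : (Fin n → Bool) → ℝ) (S : Finset (Fin n)) :
    fourier f S = (∑ x : Fin n → Bool, f x * chi S x) / 2 ^ n := rfl

lemma sum_chi {n : ℕ} (x y : Fin n → Bool) :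
    ∑ S : Finset (Fin n), chi S x * chi S y = if x = y then (2:ℝ) ^ n else 0 := by
  have h : ∀ S ∈ (univ : Finset (Fin n)).powerset, chi S x * chi S y
      = (∏ i ∈ S, (toPM (x i) * toPM (y i))) * ∏ i ∈ univ \ S, (1:ℝ) := by
    intro S _; simp [chi, Finset.prod_mul_distrib]
  calc ∑ S : Finset (Fin n), chi S x * chi S y
      = ∑ S ∈ (univ : Finset (Fin n)).powerset,
          (∏ i ∈ S, (toPM (x i) * toPM (y i))) * ∏ i ∈ univ \ S, (1:ℝ) := by
        rw [Finset.powerset_univ]; exact Finset.sum_congr rfl fun S hS => h S (by simp)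
    _ = ∏ i : Fin n, (toPM (x i) * toPM (y i) + 1) := (Finset.prod_add _ _ _).symm
    _ = if x = y then (2:ℝ) ^ n else 0 := by
        by_cases hxy : x = y
        · subst hxy
          rw [if_pos rfl]
          rw [Finset.prod_congr rfl (fun i _ => by rw [toPM_sq]; norm_num : ∀ i ∈ univ, toPM (x i) * toPM (x i) + 1 = (2:ℝ))]
          simp
        · rw [if_neg hxy]
          obtain ⟨i, hi⟩ : ∃ i, x i ≠ y i := by
            by_contra h; push_neg at h; exact hxy (funext h)
          apply Finset.prod_eq_zero (Finset.mem_univ i)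
          cases hx : x i <;> cases hy : y i <;> simp_all [toPM] <;> norm_num

lemma parseval {n : ℕ} (f : (Fin n → Bool) → ℝ) (hb : ∀ x, f x = 1 ∨ f x = -1) :
    ∑ S : Finset (Fin n), fourier f S ^ 2 = 1 := by
  have step1 : ∀ S : Finset (Fin n), fourier f S ^ 2
      = (∑ x : Fin n → Bool, ∑ y : Fin n → Bool, (f x * f y) * (chi S x * chi S y))
        / ((2:ℝ)^n * 2^n) := by
    intro S
    rw [fourier_eq, sq, div_mul_div_comm]
    congr 1
    rw [Finset.sum_mul_sum]
    exact Finset.sum_congr rfl fun x _ => Finset.sum_congr rfl fun y _ => by ring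
  rw [Finset.sum_congr rfl fun S _ => step1 S, ← Finset.sum_div]
  have step2 : ∀ x : Fin n → Bool,
      ∑ y : Fin n → Bool, ∑ S : Finset (Fin n), (f x * f y) * (chi S x * chi S y)
        = (2:ℝ)^n := by
    intro x
    have h1 : ∀ y : Fin n → Bool, ∑ S : Finset (Fin n), (f x * f y) * (chi S x * chi S y)
        = if x = y then (f x * f y) * 2^n else 0 := by
      intro y
      rw [← Finset.mul_sum, sum_chi]
      split <;> simp
    rw [Finset.sum_congr rfl fun y _ => h1 y, Finset.sum_ite_eq]
    simp only [Finset.mem_univ, if_true]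
    rcases hb x with h | h <;> rw [h] <;> ring
  rw [Finset.sum_comm]
  rw [Finset.sum_congr rfl fun x _ => Finset.sum_comm]
  rw [Finset.sum_congr rfl fun x _ => step2 x]
  rw [Finset.sum_const]
  have hcard : (Finset.univ : Finset (Fin n → Bool)).card = 2 ^ n := by simp
  rw [hcard, nsmul_eq_mul]
  push_cast
  rw [div_self (by positivity)]


open Classical in
lemma master {n : ℕ} (f : (Fin n → Bool) → ℝ) (T S : Finset (Fin n)) (hST : S ⊆ T) :
    ∑ U ∈ Tᶜ.powerset, fourier f (S ∪ U)
      = (∑ x ∈ univ.filter (fun x : Fin n → Bool => ∀ i ∈ Tᶜ, x i = false),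
          f x * chi S x) / 2 ^ T.card := by
  have key : ∀ x : Fin n → Bool, ∑ U ∈ Tᶜ.powerset, chi (S ∪ U) x
      = chi S x * (if ∀ i ∈ Tᶜ, x i = false then (2:ℝ) ^ Tᶜ.card else 0) := by
    intro x
    have hdisj : ∀ U ∈ Tᶜ.powerset, chi (S ∪ U) x = chi S x * chi U x := by
      intro U hU
      have : Disjoint S U := by
        have hUT : U ⊆ Tᶜ := Finset.mem_powerset.mp hU
        exact Finset.disjoint_left.mpr fun i hiS hiU =>
          (Finset.mem_compl.mp (hUT hiU)) (hST hiS)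
      rw [chi, chi, chi, ← Finset.prod_union this]
    rw [Finset.sum_congr rfl hdisj, ← Finset.mul_sum]
    congr 1
    have hexp : ∑ U ∈ Tᶜ.powerset, chi U x = ∏ i ∈ Tᶜ, (toPM (x i) + 1) := by
      rw [Finset.prod_add]
      exact (Finset.sum_congr rfl fun U _ => by simp [chi]).symm
    rw [hexp]
    by_cases hx : ∀ i ∈ Tᶜ, x i = false
    · rw [if_pos hx,
        Finset.prod_congr rfl (fun i hi => by rw [hx i hi] ; norm_num [toPM] :
          ∀ i ∈ Tᶜ, toPM (x i) + 1 = (2:ℝ)),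
        Finset.prod_const]
    · push_neg at hx
      obtain ⟨i, hi, hxi⟩ := hx
      rw [if_neg (by push_neg; exact ⟨i, hi, hxi⟩)]
      apply Finset.prod_eq_zero hi
      have : x i = true := by simpa using hxi
      rw [this]; norm_num [toPM]
  calc ∑ U ∈ Tᶜ.powerset, fourier f (S ∪ U)
      = (∑ U ∈ Tᶜ.powerset, ∑ x : Fin n → Bool, f x * chi (S ∪ U) x) / 2 ^ n := by
        rw [Finset.sum_div]
        exact Finset.sum_congr rfl fun U _ => fourier_eq f (S ∪ U)
    _ = (∑ x : Fin n → Bool, f x * ∑ U ∈ Tᶜ.powerset, chi (S ∪ U) x) / 2 ^ n := by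
        rw [Finset.sum_comm]
        congr 1
        exact Finset.sum_congr rfl fun x _ => by rw [Finset.mul_sum]
    _ = (∑ x : Fin n → Bool,
          (if ∀ i ∈ Tᶜ, x i = false then f x * chi S x * 2 ^ Tᶜ.card else 0)) / 2 ^ n := by
        congr 1
        refine Finset.sum_congr rfl fun x _ => ?_
        rw [key x]
        split <;> ring
    _ = ((∑ x ∈ univ.filter (fun x : Fin n → Bool => ∀ i ∈ Tᶜ, x i = false),
          f x * chi S x) * 2 ^ Tᶜ.card) / 2 ^ n := by
        rw [Finset.sum_filter, Finset.sum_mul]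
        congr 1
        exact Finset.sum_congr rfl fun x _ => by split <;> simp
    _ = _ := by
        have hn : T.card + Tᶜ.card = n := by
          simpa using Finset.card_add_card_compl T
        rw [show (2:ℝ)^n = 2^T.card * 2^Tᶜ.card by rw [← pow_add, hn]]
        field_simp

lemma Gsum {ι : Type*} (d : ℕ) (s : Finset ι) (F : ι → ℝ)
    (h : ∀ i ∈ s, ∃ m : ℤ, F i = (m : ℝ) / 2 ^ d) :
    ∃ m : ℤ, ∑ i ∈ s, F i = (m : ℝ) / 2 ^ d := by
  classical
  induction s using Finset.induction_on with
  | empty => exact ⟨0, by simp⟩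
  | insert _ _ hx ih =>
    obtain ⟨m1, hm1⟩ := h _ (Finset.mem_insert_self _ _)
    obtain ⟨m2, hm2⟩ := ih fun i hi => h i (Finset.mem_insert_of_mem hi)
    exact ⟨m1 + m2, by rw [Finset.sum_insert hx, hm1, hm2]; push_cast; ring⟩

open Classical in
lemma gran {n d : ℕ} (f : (Fin n → Bool) → ℝ) (hb : ∀ x, f x = 1 ∨ f x = -1)
    (hd : ∀ S : Finset (Fin n), d < S.card → fourier f S = 0) :
    ∀ S : Finset (Fin n), ∃ m : ℤ, fourier f S = (m : ℝ) / 2 ^ d := by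
  suffices H : ∀ k : ℕ, ∀ S : Finset (Fin n), n - S.card ≤ k →
      ∃ m : ℤ, fourier f S = (m : ℝ) / 2 ^ d from
    fun S => H n S (Nat.sub_le _ _)
  intro k
  induction k using Nat.strong_induction_on with
  | _ k ih =>
  intro S hSk
  by_cases hSd : d < S.card
  · exact ⟨0, by rw [hd S hSd]; simp⟩
  push_neg at hSd
  have hSn : S.card ≤ n := by
    simpa using Finset.card_le_univ S
  obtain ⟨T, hST, -, hTcard⟩ := Finset.exists_subsuperset_card_eq (Finset.subset_univ S)
    (le_min hSd hSn) (by simpa using min_le_right d n)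
  have hTd : T.card ≤ d := hTcard ▸ min_le_left d n
  set D := univ.filter (fun x : Fin n → Bool => ∀ i ∈ Tᶜ, x i = false) with hD
  have hA : ∃ a : ℤ, (∑ x ∈ D, f x * chi S x) = (a : ℝ) := by
    refine ⟨∑ x ∈ D, if f x * chi S x = 1 then 1 else -1, ?_⟩
    rw [Int.cast_sum]
    refine Finset.sum_congr rfl fun x _ => ?_
    rcases hb x with h1 | h1 <;> rcases chi_pm S x with h2 | h2 <;> norm_num [h1, h2]
  have hemp : (∅ : Finset (Fin n)) ∈ Tᶜ.powerset := Finset.empty_mem_powerset _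
  have hsplit : fourier f S = (∑ x ∈ D, f x * chi S x) / 2 ^ T.card
      - ∑ U ∈ Tᶜ.powerset.erase ∅, fourier f (S ∪ U) := by
    rw [← master f T S hST, ← Finset.add_sum_erase _ _ hemp]
    simp
  have hrec : ∀ U ∈ Tᶜ.powerset.erase ∅, ∃ m : ℤ, fourier f (S ∪ U) = (m : ℝ) / 2 ^ d := by
    intro U hU
    have hUne : U ≠ ∅ := Finset.ne_of_mem_erase hU
    have hUT : U ⊆ Tᶜ := Finset.mem_powerset.mp (Finset.mem_of_mem_erase hU)
    by_cases hcard : d < (S ∪ U).card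
    · exact ⟨0, by rw [hd _ hcard]; simp⟩
    have hdisj : Disjoint S U := Finset.disjoint_left.mpr fun i hiS hiU =>
      (Finset.mem_compl.mp (hUT hiU)) (hST hiS)
    have hcu : (S ∪ U).card = S.card + U.card := Finset.card_union_of_disjoint hdisj
    have hU1 : 1 ≤ U.card := Finset.card_pos.mpr (Finset.nonempty_of_ne_empty hUne)
    have hle : (S ∪ U).card ≤ n := by simpa using Finset.card_le_univ (S ∪ U)
    exact ih (n - (S ∪ U).card) (by omega) (S ∪ U) le_rfl
  obtain ⟨a, ha⟩ := hA
  obtain ⟨m2, hm2⟩ := Gsum d _ _ hrec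
  refine ⟨a * 2 ^ (d - T.card) - m2, ?_⟩
  rw [hsplit, ha, hm2]
  have h2 : (2:ℝ) ^ T.card * 2 ^ (d - T.card) = 2 ^ d := by
    rw [← pow_add]; congr 1; omega
  push_cast
  rw [sub_div]
  congr 1
  rw [div_eq_div_iff (by positivity) (by positivity), ← h2]
  ring


/-- a degree-`d` Boolean function has Fourier sparsity at most `4^d`. -/
theorem stmt12 {n d : ℕ} (f : (Fin n → Bool) → ℝ)
    (hb : ∀ x, f x = 1 ∨ f x = -1)
    (hd : ∀ S : Finset (Fin n), d < S.card → fourier f S = 0) :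
    Set.ncard {S : Finset (Fin n) | fourier f S ≠ 0} ≤ 4 ^ d := by
  classical
  have gr := gran f hb hd
  have hps := parseval f hb
  set F : Finset (Finset (Fin n)) := univ.filter (fun S => fourier f S ≠ 0) with hF
  have hncard : Set.ncard {S : Finset (Fin n) | fourier f S ≠ 0} = F.card := by
    rw [Set.ncard_eq_toFinset_card', Set.toFinset_setOf]
  have hlow : ∀ S ∈ F, ((4:ℝ) ^ d)⁻¹ ≤ fourier f S ^ 2 := by
    intro S hS
    have hne : fourier f S ≠ 0 := (Finset.mem_filter.mp hS).2
    obtain ⟨m, hm⟩ := gr S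
    have hm0 : m ≠ 0 := by rintro rfl; simp at hm; exact hne hm
    have h1 : (1:ℝ) ≤ (m:ℝ) ^ 2 := by
      have : (1:ℤ) ≤ m ^ 2 := by rcases lt_or_gt_of_ne hm0 with h | h <;> nlinarith
      exact_mod_cast this
    have h4 : ((2:ℝ) ^ d) ^ 2 = 4 ^ d := by
      rw [← pow_mul, mul_comm, pow_mul]; norm_num
    rw [hm, div_pow, h4, le_div_iff₀ (by positivity), inv_mul_cancel₀ (by positivity)]
    exact h1
  have hsum : (F.card : ℝ) * ((4:ℝ) ^ d)⁻¹ ≤ 1 := by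
    calc (F.card : ℝ) * ((4:ℝ) ^ d)⁻¹ = ∑ _S ∈ F, ((4:ℝ) ^ d)⁻¹ := by
          rw [Finset.sum_const, nsmul_eq_mul]
      _ ≤ ∑ S ∈ F, fourier f S ^ 2 := Finset.sum_le_sum hlow
      _ ≤ ∑ S : Finset (Fin n), fourier f S ^ 2 :=
          Finset.sum_le_sum_of_subset_of_nonneg (Finset.subset_univ F)
            (fun _ _ _ => sq_nonneg _)
      _ = 1 := hps
  have hfinal : (F.card : ℝ) ≤ 4 ^ d := by
    have h4 : (0:ℝ) < 4 ^ d := by positivity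
    calc (F.card : ℝ) = ((F.card : ℝ) * ((4:ℝ) ^ d)⁻¹) * 4 ^ d := by field_simp
      _ ≤ 1 * 4 ^ d := by gcongr
      _ = 4 ^ d := one_mul _
  rw [hncard]
  exact_mod_cast hfinal

end Paper
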